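/- The Schlumprecht space S is isomorphic to its square: there exists a linear homeomorphism between S and S × S (equipped with the maximum norm). -/

import Mathlib

abbrev c00 : Type := ℕ →₀ ℝ

noncomputable def flog (x : ℝ) : ℝ := Real.logb 2 (x + 1)

noncomputable def supNorm (x : c00) : ℝ := ⨆ i, |x i|

def proj (E : Finset ℕ) (x : c00) : c00 := x.filter (· ∈ E)

def FLt (A B : Finset ℕ) : Prop := ∀ a ∈ A, ∀ b ∈ B, a < b

def IsNormC00 (N : c00 → ℝ) : Prop :=
  (∀ x, N x = 0 ↔ x = 0) ∧ (∀ x y, N (x + y) ≤ N x + N y) ∧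
    ∀ (a : ℝ) (x : c00), N (a • x) = |a| * N x

def schSet (N : c00 → ℝ) (x : c00) : Set ℝ :=
  {s | ∃ n : ℕ, 2 ≤ n ∧ ∃ E : Fin n → Finset ℕ,
    (∀ i j : Fin n, i < j → FLt (E i) (E j)) ∧
    s = (flog n)⁻¹ * ∑ i, N (proj (E i) x)}

def IsSchlumprechtNorm (N : c00 → ℝ) : Prop :=
  IsNormC00 N ∧ ∀ x : c00, IsLUB (insert (supNorm x) (schSet N x)) (N x)

def IsBlockSeq (x : ℕ → c00) : Prop :=
  (∀ n, x n ≠ 0) ∧ ∀ n, ∀ i ∈ (x n).support, ∀ j ∈ (x (n+1)).support, i < j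

def SeqEquiv (N : c00 → ℝ) (u v : ℕ → c00) : Prop :=
  ∃ c : ℝ, 1 ≤ c ∧ ∀ a : ℕ →₀ ℝ,
    (1 / c) * N (a.sum fun i t => t • u i) ≤ N (a.sum fun i t => t • v i) ∧
    N (a.sum fun i t => t • v i) ≤ c * N (a.sum fun i t => t • u i)

section Basic
variable {N M : c00 → ℝ}

lemma N_zero (hN : IsSchlumprechtNorm N) : N 0 = 0 := (hN.1.1 0).2 rfl

lemma N_nonneg (hN : IsSchlumprechtNorm N) (x : c00) : 0 ≤ N x := by
  have h := hN.1.2.1 x (-x)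
  have h2 : N (-x) = N x := by
    have := hN.1.2.2 (-1) x
    simpa using this
  rw [add_neg_cancel, N_zero hN] at h
  linarith

lemma abs_apply_le_sum (x : c00) (i : ℕ) : |x i| ≤ ∑ k ∈ x.support, |x k| := by
  by_cases h : i ∈ x.support
  · exact Finset.single_le_sum (f := fun k => |x k|) (fun k _ => abs_nonneg _) h
  · rw [Finsupp.notMem_support_iff.1 h, abs_zero]
    exact Finset.sum_nonneg fun k _ => abs_nonneg _

lemma bddAbs (x : c00) : BddAbove (Set.range fun i => |x i|) :=
  ⟨∑ k ∈ x.support, |x k|, by rintro _ ⟨i, rfl⟩; exact abs_apply_le_sum x i⟩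

lemma supNorm_nonneg (x : c00) : 0 ≤ supNorm x :=
  le_trans (abs_nonneg (x 0)) (le_ciSup (bddAbs x) 0)

lemma supNorm_mono {x y : c00} (h : ∀ i, |y i| ≤ |x i|) : supNorm y ≤ supNorm x :=
  ciSup_le fun i => (h i).trans (le_ciSup (bddAbs x) i)

lemma supNorm_le_N (hN : IsSchlumprechtNorm N) (x : c00) : supNorm x ≤ N x :=
  (hN.2 x).1 (Set.mem_insert _ _)

lemma schSet_le (hN : IsSchlumprechtNorm N) {x : c00} {s : ℝ} (hs : s ∈ schSet N x) : s ≤ N x :=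
  (hN.2 x).1 (Set.mem_insert_of_mem _ hs)

lemma proj_apply (E : Finset ℕ) (x : c00) (i : ℕ) : proj E x i = if i ∈ E then x i else 0 :=
  Finsupp.filter_apply _ _ _

lemma proj_proj (E F : Finset ℕ) (x : c00) : proj E (proj F x) = proj (E ∩ F) x := by
  ext i
  simp only [proj_apply, Finset.mem_inter]
  split_ifs with h1 h2 h3 <;> tauto

lemma FLt_mono {A B A' B' : Finset ℕ} (hA : A' ⊆ A) (hB : B' ⊆ B) (h : FLt A B) : FLt A' B' :=
  fun a ha b hb => h a (hA ha) b (hB hb)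

lemma N_proj_le (hN : IsSchlumprechtNorm N) (E : Finset ℕ) (x : c00) : N (proj E x) ≤ N x := by
  apply (hN.2 (proj E x)).2
  rintro s hs
  rcases Set.mem_insert_iff.1 hs with rfl | hs
  · refine le_trans (supNorm_mono fun i => ?_) (supNorm_le_N hN x)
    rw [proj_apply]
    split_ifs with h
    · exact le_refl _
    · simp
  · obtain ⟨n, hn, Es, hEs, rfl⟩ := hs
    apply schSet_le hN
    refine ⟨n, hn, fun i => Es i ∩ E, fun i j hij => FLt_mono Finset.inter_subset_left
      Finset.inter_subset_left (hEs i j hij), ?_⟩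
    congr 1
    exact Finset.sum_congr rfl fun i _ => by rw [proj_proj]

lemma flog_two_lt : 1 < flog 2 := by
  have h2 : (0:ℝ) < Real.log 2 := Real.log_pos (by norm_num)
  have h3 : Real.log 2 < Real.log 3 := Real.log_lt_log (by norm_num) (by norm_num)
  rw [flog, show (2:ℝ)+1 = 3 by norm_num, Real.logb, lt_div_iff₀ h2, one_mul]
  exact h3

lemma flog_le_flog {n m : ℕ} (hn : 2 ≤ n) (h : n ≤ m) : flog n ≤ flog m := by
  rw [flog, flog]
  apply Real.logb_le_logb_of_le (by norm_num) (by positivity)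
  have : (n:ℝ) ≤ m := by exact_mod_cast h
  linarith

lemma flog_two_le {n : ℕ} (hn : 2 ≤ n) : flog 2 ≤ flog n := by
  have := flog_le_flog (le_refl 2) hn
  simpa using this

lemma flog_pos {n : ℕ} (hn : 2 ≤ n) : 0 < flog n :=
  lt_of_lt_of_le (by linarith [flog_two_lt]) (flog_two_le hn)

lemma flog_inv_le {n : ℕ} (hn : 2 ≤ n) : (flog n)⁻¹ ≤ (flog 2)⁻¹ := by
  apply inv_anti₀ (by linarith [flog_two_lt]) (flog_two_le hn)

end Basic

section Unique
variable {N M : c00 → ℝ}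

lemma sch_le (hN : IsSchlumprechtNorm N) (hM : IsSchlumprechtNorm M) (x : c00) : N x ≤ M x := by
  suffices h : ∀ m : ℕ, ∀ x : c00, x.support.card < m → N x ≤ M x by
    exact h (x.support.card + 1) x (Nat.lt_succ_self _)
  intro m
  induction m with
  | zero => intro x hx; omega
  | succ m ih =>
    intro x hx
    have key : N x ≤ max (M x) ((flog 2)⁻¹ * N x) := by
      apply (hN.2 x).2
      rintro s hs
      rcases Set.mem_insert_iff.1 hs with rfl | hs
      · exact le_max_of_le_left (supNorm_le_N hM x)
      obtain ⟨n, hn, E, hE, rfl⟩ := hs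
      by_cases hcase : ∃ i j : Fin n, i ≠ j ∧ proj (E i) x ≠ 0 ∧ proj (E j) x ≠ 0
      · obtain ⟨i0, j0, hij, h0, h1⟩ := hcase
        have hdisj : ∀ i j : Fin n, i ≠ j → Disjoint (E i) (E j) := by
          intro i j hne
          rcases hne.lt_or_gt with h | h
          · exact Finset.disjoint_left.2 fun a ha hb => lt_irrefl a (hE i j h a ha a hb)
          · exact Finset.disjoint_right.2 fun a ha hb => lt_irrefl a (hE j i h a ha a hb)
        have hterm : ∀ i, N (proj (E i) x) ≤ M (proj (E i) x) := by
          intro i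
          by_cases hz : proj (E i) x = 0
          · rw [hz, N_zero hN, N_zero hM]
          · obtain ⟨jj, hji, hjnz⟩ : ∃ jj, jj ≠ i ∧ proj (E jj) x ≠ 0 := by
              rcases eq_or_ne i i0 with rfl | h
              · exact ⟨j0, hij.symm, h1⟩
              · exact ⟨i0, h.symm, h0⟩
            apply ih
            have hsub : (proj (E i) x).support ⊂ x.support := by
              constructor
              · rw [proj]; rw [Finsupp.support_filter]; exact Finset.filter_subset _ _
              · intro hcon
                obtain ⟨k, hk⟩ := Finsupp.support_nonempty_iff.2 hjnz
                have hk2 : k ∈ (proj (E jj) x).support := hk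
                rw [proj, Finsupp.support_filter, Finset.mem_filter] at hk2
                have : k ∈ (proj (E i) x).support := hcon hk2.1
                rw [proj, Finsupp.support_filter, Finset.mem_filter] at this
                exact (Finset.disjoint_left.1 (hdisj jj i hji) hk2.2) this.2
            have := Finset.card_lt_card hsub
            omega
        refine le_max_of_le_left ?_
        calc (flog n)⁻¹ * ∑ i, N (proj (E i) x)
            ≤ (flog n)⁻¹ * ∑ i, M (proj (E i) x) := by
              apply mul_le_mul_of_nonneg_left (Finset.sum_le_sum fun i _ => hterm i)
              exact inv_nonneg.2 (le_of_lt (flog_pos hn))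
          _ ≤ M x := schSet_le hM ⟨n, hn, E, hE, rfl⟩
      · have hsum : ∑ i, N (proj (E i) x) ≤ N x := by
          by_cases hall : ∀ i, proj (E i) x = 0
          · have : ∀ i : Fin n, N (proj (E i) x) = 0 := fun i => by rw [hall i, N_zero hN]
            rw [Finset.sum_congr rfl fun i _ => this i, Finset.sum_const, smul_zero]
            exact N_nonneg hN x
          · push_neg at hall
            obtain ⟨i0, hi0⟩ := hall
            have hz : ∀ jj ∈ Finset.univ, jj ≠ i0 → N (proj (E jj) x) = 0 := by
              intro jj _ hj
              have : proj (E jj) x = 0 := by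
                by_contra h
                exact hcase ⟨jj, i0, hj, h, hi0⟩
              rw [this, N_zero hN]
            rw [Finset.sum_eq_single i0 hz (by simp)]
            exact N_proj_le hN _ x
        refine le_max_of_le_right ?_
        calc (flog n)⁻¹ * ∑ i, N (proj (E i) x)
            ≤ (flog n)⁻¹ * N x :=
              mul_le_mul_of_nonneg_left hsum (inv_nonneg.2 (le_of_lt (flog_pos hn)))
          _ ≤ (flog 2)⁻¹ * N x := mul_le_mul_of_nonneg_right (flog_inv_le hn) (N_nonneg hN x)
    rcases le_max_iff.1 key with h | h
    · exact h
    · have h1 : (flog 2)⁻¹ < 1 := by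
        rw [inv_lt_one_iff₀]; right; exact flog_two_lt
      nlinarith [N_nonneg hN x, N_nonneg hM x]

lemma sch_unique (hN : IsSchlumprechtNorm N) (hM : IsSchlumprechtNorm M) : N = M :=
  funext fun x => le_antisymm (sch_le hN hM x) (sch_le hM hN x)

end Unique

section Spread
open Finsupp
variable {N : c00 → ℝ}

lemma supNorm_embDomain (f : ℕ ↪ ℕ) (x : c00) : supNorm (embDomain f x) = supNorm x := by
  apply le_antisymm
  · apply ciSup_le
    intro i
    by_cases h : i ∈ Set.range f
    · obtain ⟨a, rfl⟩ := h
      rw [embDomain_apply_self]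
      exact le_ciSup (bddAbs x) a
    · rw [embDomain_notin_range f x i h, abs_zero]
      exact supNorm_nonneg x
  · apply ciSup_le
    intro a
    rw [← embDomain_apply_self f x a]
    exact le_ciSup (bddAbs _) (f a)

lemma proj_embDomain (f : ℕ ↪ ℕ) (F : Finset ℕ) (x : c00) :
    proj (F.map f) (embDomain f x) = embDomain f (proj F x) := by
  ext i
  by_cases h : i ∈ Set.range f
  · obtain ⟨a, rfl⟩ := h
    rw [proj_apply, embDomain_apply_self]
    by_cases ha : a ∈ F
    · rw [if_pos (Finset.mem_map_of_mem f ha), embDomain_apply_self, proj_apply, if_pos ha]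
    · rw [if_neg (by simpa [Finset.mem_map'] using ha), embDomain_apply_self, proj_apply, if_neg ha]
  · rw [proj_apply, embDomain_notin_range _ _ _ h, embDomain_notin_range _ _ _ h]
    split_ifs <;> rfl

lemma proj_embDomain' (f : ℕ ↪ ℕ) (E : Finset ℕ) (x : c00) :
    proj E (embDomain f x) = embDomain f (proj (E.preimage f f.injective.injOn) x) := by
  ext i
  by_cases h : i ∈ Set.range f
  · obtain ⟨a, rfl⟩ := h
    simp only [proj_apply, embDomain_apply_self, Finset.mem_preimage]
  · rw [proj_apply, embDomain_notin_range _ _ _ h, embDomain_notin_range _ _ _ h]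
    split_ifs <;> rfl

lemma schSet_embDomain (f : ℕ ↪ ℕ) (hf : StrictMono f) (x : c00) :
    schSet N (embDomain f x) = schSet (fun y => N (embDomain f y)) x := by
  ext s
  constructor
  · rintro ⟨n, hn, E, hE, rfl⟩
    refine ⟨n, hn, fun i => (E i).preimage f f.injective.injOn, ?_, ?_⟩
    · intro i j hij a ha b hb
      rw [Finset.mem_preimage] at ha hb
      exact hf.lt_iff_lt.1 (hE i j hij _ ha _ hb)
    · congr 1
      exact Finset.sum_congr rfl fun i _ => by rw [proj_embDomain']
  · rintro ⟨n, hn, F, hF, rfl⟩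
    refine ⟨n, hn, fun i => (F i).map f, ?_, ?_⟩
    · intro i j hij a ha b hb
      rw [Finset.mem_map] at ha hb
      obtain ⟨a', ha', rfl⟩ := ha
      obtain ⟨b', hb', rfl⟩ := hb
      exact hf (hF i j hij _ ha' _ hb')
    · congr 1
      exact Finset.sum_congr rfl fun i _ => by rw [proj_embDomain]

lemma isSch_embDomain (hN : IsSchlumprechtNorm N) (f : ℕ ↪ ℕ) (hf : StrictMono f) :
    IsSchlumprechtNorm (fun x => N (embDomain f x)) := by
  constructor
  · refine ⟨fun x => ?_, fun x y => ?_, fun a x => ?_⟩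
    · rw [hN.1.1]
      constructor
      · intro h
        apply embDomain_injective f
        rw [h, embDomain_zero]
      · rintro rfl; exact embDomain_zero f
    · dsimp only
      rw [embDomain_eq_mapDomain, embDomain_eq_mapDomain, embDomain_eq_mapDomain,
        mapDomain_add]
      exact hN.1.2.1 _ _
    · dsimp only
      rw [embDomain_eq_mapDomain, embDomain_eq_mapDomain,
        show mapDomain (⇑f) (a • x) = a • mapDomain (⇑f) x from mapDomain_smul a x]
      exact hN.1.2.2 _ _
  · intro x
    have := hN.2 (embDomain f x)
    rwa [supNorm_embDomain, schSet_embDomain f hf] at this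

lemma N_embDomain (hN : IsSchlumprechtNorm N) (f : ℕ ↪ ℕ) (hf : StrictMono f) (x : c00) :
    N (embDomain f x) = N x :=
  congrFun (sch_unique (isSch_embDomain hN f hf) hN) x

end Spread

section EvenOdd
open Finsupp
variable {N : c00 → ℝ}

def fe : ℕ ↪ ℕ := ⟨fun i => 2*i, fun a b h => by have h2 : 2*a = 2*b := h; omega⟩
def fo : ℕ ↪ ℕ := ⟨fun i => 2*i+1, fun a b h => by have h2 : 2*a+1 = 2*b+1 := h; omega⟩

lemma fe_mono : StrictMono ⇑fe := fun a b h => by change 2*a < 2*b; omega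
lemma fo_mono : StrictMono ⇑fo := fun a b h => by change 2*a+1 < 2*b+1; omega

noncomputable def embE : c00 →ₗ[ℝ] c00 := Finsupp.lmapDomain ℝ ℝ ⇑fe
noncomputable def embO : c00 →ₗ[ℝ] c00 := Finsupp.lmapDomain ℝ ℝ ⇑fo
noncomputable def eM : c00 →ₗ[ℝ] c00 := Finsupp.lcomapDomain ⇑fe fe.injective
noncomputable def oM : c00 →ₗ[ℝ] c00 := Finsupp.lcomapDomain ⇑fo fo.injective

lemma embE_eq (x : c00) : embE x = embDomain fe x := by
  rw [embDomain_eq_mapDomain]; rfl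

lemma embO_eq (x : c00) : embO x = embDomain fo x := by
  rw [embDomain_eq_mapDomain]; rfl

lemma eM_apply (x : c00) (i : ℕ) : eM x i = x (2*i) :=
  comapDomain_apply _ _ _ _

lemma oM_apply (x : c00) (i : ℕ) : oM x i = x (2*i+1) :=
  comapDomain_apply _ _ _ _

lemma eM_embE (a : c00) : eM (embE a) = a := by
  ext i
  rw [eM_apply, embE_eq, show 2*i = fe i from rfl, embDomain_apply_self]

lemma oM_embO (a : c00) : oM (embO a) = a := by
  ext i
  rw [oM_apply, embO_eq, show 2*i+1 = fo i from rfl, embDomain_apply_self]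

lemma eM_embO (a : c00) : eM (embO a) = 0 := by
  ext i
  rw [eM_apply, embO_eq, embDomain_notin_range]
  · rfl
  · rintro ⟨b, hb⟩
    simp only [fo, Function.Embedding.coeFn_mk] at hb; dsimp only [DFunLike.coe] at hb
    omega

lemma oM_embE (a : c00) : oM (embE a) = 0 := by
  ext i
  rw [oM_apply, embE_eq, embDomain_notin_range]
  · rfl
  · rintro ⟨b, hb⟩
    simp only [fe, Function.Embedding.coeFn_mk] at hb; dsimp only [DFunLike.coe] at hb
    omega

lemma decomp (x : c00) : embE (eM x) + embO (oM x) = x := by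
  ext i
  rw [Finsupp.add_apply, embE_eq, embO_eq]
  rcases Nat.even_or_odd i with ⟨k, hk⟩ | ⟨k, hk⟩
  · have hi : i = fe k := by simp only [fe, Function.Embedding.coeFn_mk]; dsimp only [DFunLike.coe]; omega
    rw [hi, embDomain_apply_self, eM_apply, embDomain_notin_range]
    · simp only [add_zero]
      rfl
    · rintro ⟨b, hb⟩
      simp only [fo, fe, Function.Embedding.coeFn_mk] at hb hi; dsimp only [DFunLike.coe] at hb hi
      omega
  · have hi : i = fo k := by simp only [fo, Function.Embedding.coeFn_mk]; omega
    rw [hi, embDomain_apply_self, oM_apply, embDomain_notin_range]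
    · simp only [zero_add]
      rfl
    · rintro ⟨b, hb⟩
      simp only [fo, fe, Function.Embedding.coeFn_mk] at hb hi; dsimp only [DFunLike.coe] at hb hi
      omega

lemma N_embE (hN : IsSchlumprechtNorm N) (x : c00) : N (embE x) = N x := by
  rw [embE_eq]; exact N_embDomain hN fe fe_mono x

lemma N_embO (hN : IsSchlumprechtNorm N) (x : c00) : N (embO x) = N x := by
  rw [embO_eq]; exact N_embDomain hN fo fo_mono x

lemma embE_eM_proj (x : c00) : embE (eM x) = proj (x.support.filter (fun i => i % 2 = 0)) x := by
  ext i
  rw [embE_eq, proj_apply]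
  rcases Nat.even_or_odd i with ⟨k, hk⟩ | ⟨k, hk⟩
  · have hi : i = fe k := by simp only [fe, Function.Embedding.coeFn_mk]; dsimp only [DFunLike.coe]; omega
    rw [hi, embDomain_apply_self, eM_apply]
    have h2 : 2 * k = fe k := rfl
    rw [h2]
    by_cases hx : x (fe k) = 0
    · rw [hx]; split_ifs <;> rfl
    · rw [if_pos]
      rw [Finset.mem_filter]
      refine ⟨Finsupp.mem_support_iff.2 hx, ?_⟩
      simp only [fe, Function.Embedding.coeFn_mk]; dsimp only [DFunLike.coe]
      omega
  · rw [embDomain_notin_range]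
    · rw [if_neg]
      rw [Finset.mem_filter]
      rintro ⟨-, h⟩
      omega
    · rintro ⟨b, hb⟩
      simp only [fe, Function.Embedding.coeFn_mk] at hb; dsimp only [DFunLike.coe] at hb
      omega

lemma embO_oM_proj (x : c00) : embO (oM x) = proj (x.support.filter (fun i => i % 2 = 1)) x := by
  ext i
  rw [embO_eq, proj_apply]
  rcases Nat.even_or_odd i with ⟨k, hk⟩ | ⟨k, hk⟩
  · rw [embDomain_notin_range]
    · rw [if_neg]
      rw [Finset.mem_filter]
      rintro ⟨-, h⟩
      omega
    · rintro ⟨b, hb⟩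
      simp only [fo, Function.Embedding.coeFn_mk] at hb; dsimp only [DFunLike.coe] at hb
      omega
  · have hi : i = fo k := by simp only [fo, Function.Embedding.coeFn_mk]; omega
    rw [hi, embDomain_apply_self, oM_apply]
    have h2 : 2 * k + 1 = fo k := rfl
    rw [h2]
    by_cases hx : x (fo k) = 0
    · rw [hx]; split_ifs <;> rfl
    · rw [if_pos]
      rw [Finset.mem_filter]
      refine ⟨Finsupp.mem_support_iff.2 hx, ?_⟩
      simp only [fo, Function.Embedding.coeFn_mk]; dsimp only [DFunLike.coe]
      omega

lemma N_eM_le (hN : IsSchlumprechtNorm N) (x : c00) : N (eM x) ≤ N x := by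
  rw [← N_embE hN (eM x), embE_eM_proj]
  exact N_proj_le hN _ x

lemma N_oM_le (hN : IsSchlumprechtNorm N) (x : c00) : N (oM x) ≤ N x := by
  rw [← N_embO hN (oM x), embO_oM_proj]
  exact N_proj_le hN _ x

lemma N_le_split (hN : IsSchlumprechtNorm N) (x : c00) : N x ≤ N (eM x) + N (oM x) := by
  calc N x = N (embE (eM x) + embO (oM x)) := by rw [decomp]
    _ ≤ N (embE (eM x)) + N (embO (oM x)) := hN.1.2.1 _ _
    _ = N (eM x) + N (oM x) := by rw [N_embE hN, N_embO hN]

end EvenOdd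

/-- the Schlumprecht space `S` is isomorphic to its square. -/
theorem schlumprecht_isomorphic_to_square
    (N : c00 → ℝ) (hN : IsSchlumprechtNorm N)
    (S : Type*) [NormedAddCommGroup S] [NormedSpace ℝ S] [CompleteSpace S]
    (j : c00 →ₗ[ℝ] S) (hj : DenseRange ⇑j) (hjn : ∀ v : c00, ‖j v‖ = N v) :
    Nonempty (S ≃L[ℝ] (S × S)) := by
  classical
  have hinj : Function.Injective ⇑j := by
    intro a b h
    have h0 : N (a - b) = 0 := by
      rw [← hjn, map_sub, h, sub_self, norm_zero]
    have := (hN.1.1 (a - b)).1 h0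
    exact sub_eq_zero.1 this
  set jpm : (c00 × c00) →ₗ[ℝ] (S × S) := j.prodMap j with hjpm
  have hjpm_coe : ⇑jpm = Prod.map ⇑j ⇑j := LinearMap.coe_prodMap j j
  have hinj2 : Function.Injective ⇑jpm := by
    rw [hjpm_coe]
    exact hinj.prodMap hinj
  set p : Submodule ℝ S := LinearMap.range j with hp
  set q : Submodule ℝ (S × S) := LinearMap.range jpm with hq
  let e1 : c00 ≃ₗ[ℝ] p := LinearEquiv.ofInjective j hinj
  let e2 : (c00 × c00) ≃ₗ[ℝ] q := LinearEquiv.ofInjective jpm hinj2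
  have he1 : ∀ v : c00, ((e1 v : p) : S) = j v := fun v => LinearEquiv.ofInjective_apply j (h := hinj) v
  have he2 : ∀ ab : c00 × c00, ((e2 ab : q) : S × S) = jpm ab :=
    fun ab => LinearEquiv.ofInjective_apply jpm (h := hinj2) ab
  -- T : S → S × S
  let Tlin : p →ₗ[ℝ] (S × S) :=
    (LinearMap.prod (j ∘ₗ eM) (j ∘ₗ oM)) ∘ₗ (e1.symm : p ≃ₗ[ℝ] c00).toLinearMap
  have hTlin : ∀ u : p, Tlin u = (j (eM (e1.symm u)), j (oM (e1.symm u))) := fun u => rfl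
  have hTb : ∀ u : p, ‖Tlin u‖ ≤ 1 * ‖u‖ := by
    intro u
    set v := e1.symm u with hv
    have hval : j v = (u : S) := by
      rw [← he1 v, hv, e1.apply_symm_apply]
    rw [hTlin, one_mul]
    have hnu : ‖u‖ = N v := by
      rw [show ‖u‖ = ‖(u : S)‖ from rfl, ← hval, hjn]
    rw [Prod.norm_def, hnu]
    exact sup_le ((hjn _).le.trans (N_eM_le hN v)) ((hjn _).le.trans (N_oM_le hN v))
  let Tc : p →L[ℝ] (S × S) := Tlin.mkContinuous 1 hTb
  have hdp : DenseRange ⇑p.subtypeL := by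
    show DenseRange (Subtype.val : p → S)
    rw [DenseRange, Subtype.range_coe]
    show Dense (LinearMap.range j : Set S)
    rw [LinearMap.coe_range]
    exact hj
  have hui : IsUniformInducing ⇑p.subtypeL :=
    isUniformEmbedding_subtype_val.isUniformInducing
  let T : S →L[ℝ] (S × S) := Tc.extend p.subtypeL
  have hT : ∀ v : c00, T (j v) = (j (eM v), j (oM v)) := by
    intro v
    have h1 : j v = p.subtypeL (e1 v) := by
      rw [show p.subtypeL (e1 v) = ((e1 v : p) : S) from rfl, he1]
    rw [h1, ContinuousLinearMap.extend_eq _ hdp hui]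
    show Tlin (e1 v) = _
    rw [hTlin, e1.symm_apply_apply]
  -- U : S × S → S
  let Ulin : q →ₗ[ℝ] S :=
    (j ∘ₗ (embE ∘ₗ LinearMap.fst ℝ c00 c00 + embO ∘ₗ LinearMap.snd ℝ c00 c00)) ∘ₗ
      (e2.symm : q ≃ₗ[ℝ] (c00 × c00)).toLinearMap
  have hUlin : ∀ w : q, Ulin w = j (embE (e2.symm w).1 + embO (e2.symm w).2) := fun w => rfl
  have hUb : ∀ w : q, ‖Ulin w‖ ≤ 2 * ‖w‖ := by
    intro w
    set ab := e2.symm w with hab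
    have hval : jpm ab = (w : S × S) := by
      rw [← he2 ab, hab, e2.apply_symm_apply]
    have hw : ‖w‖ = max ‖j ab.1‖ ‖j ab.2‖ := by
      rw [show ‖w‖ = ‖(w : S × S)‖ from rfl, ← hval,
        show jpm ab = (j ab.1, j ab.2) from rfl, Prod.norm_def]
    rw [hUlin, hjn, hw]
    calc N (embE ab.1 + embO ab.2) ≤ N (embE ab.1) + N (embO ab.2) := hN.1.2.1 _ _
      _ = N ab.1 + N ab.2 := by rw [N_embE hN, N_embO hN]
      _ ≤ ‖j ab.1‖ + ‖j ab.2‖ := by rw [hjn, hjn]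
      _ ≤ 2 * max ‖j ab.1‖ ‖j ab.2‖ := by
          have := le_max_left ‖j ab.1‖ ‖j ab.2‖
          have := le_max_right ‖j ab.1‖ ‖j ab.2‖
          linarith
  let Uc : q →L[ℝ] S := Ulin.mkContinuous 2 hUb
  have hdq : DenseRange ⇑q.subtypeL := by
    show DenseRange (Subtype.val : q → S × S)
    rw [DenseRange, Subtype.range_coe]
    show Dense (LinearMap.range jpm : Set (S × S))
    rw [LinearMap.coe_range, hjpm_coe]
    exact hj.prodMap hj
  have hui2 : IsUniformInducing ⇑q.subtypeL :=
    isUniformEmbedding_subtype_val.isUniformInducing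
  let U : (S × S) →L[ℝ] S := Uc.extend q.subtypeL
  have hU : ∀ ab : c00 × c00, U (jpm ab) = j (embE ab.1 + embO ab.2) := by
    intro ab
    have h1 : jpm ab = q.subtypeL (e2 ab) := by
      rw [show q.subtypeL (e2 ab) = ((e2 ab : q) : S × S) from rfl, he2]
    rw [h1, ContinuousLinearMap.extend_eq _ hdq hui2]
    show Ulin (e2 ab) = _
    rw [hUlin, e2.symm_apply_apply]
  -- inverse identities
  have hUT : Function.LeftInverse ⇑U ⇑T := by
    intro s
    have hcl : IsClosed {s : S | U (T s) = s} :=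
      isClosed_eq (U.continuous.comp T.continuous) continuous_id
    have hsub : Set.range ⇑j ⊆ {s : S | U (T s) = s} := by
      rintro _ ⟨v, rfl⟩
      show U (T (j v)) = j v
      rw [hT, show ((j (eM v), j (oM v)) : S × S) = jpm (eM v, oM v) from rfl, hU]
      show j (embE (eM v) + embO (oM v)) = j v
      rw [decomp]
    have := closure_mono hsub
    rw [hcl.closure_eq] at this
    exact this (hj s)
  have hTU : Function.RightInverse ⇑U ⇑T := by
    intro w
    have hcl : IsClosed {w : S × S | T (U w) = w} :=
      isClosed_eq (T.continuous.comp U.continuous) continuous_id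
    have hdense : DenseRange ⇑jpm := by
      rw [hjpm_coe]
      exact hj.prodMap hj
    have hsub : Set.range ⇑jpm ⊆ {w : S × S | T (U w) = w} := by
      rintro _ ⟨ab, rfl⟩
      show T (U (jpm ab)) = jpm ab
      rw [hU, hT]
      have h1 : eM (embE ab.1 + embO ab.2) = ab.1 := by
        rw [map_add, eM_embE, eM_embO, add_zero]
      have h2 : oM (embE ab.1 + embO ab.2) = ab.2 := by
        rw [map_add, oM_embE, oM_embO, zero_add]
      rw [h1, h2]
      rfl
    have := closure_mono hsub
    rw [hcl.closure_eq] at this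
    exact this (hdense w)
  exact ⟨ContinuousLinearEquiv.equivOfInverse T U hUT hTU⟩
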